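/- For an infinite group G, the following two cardinals are equal: (1) the minimum weight of a Hausdorff linear group topology on G (a group topology with a neighborhood base at the identity consisting of open subgroups); (2) the smallest cardinal κ such that there exist subgroups G_i (i < κ) each of index at most κ in G with ⋂_{i<κ} G_i = {1}. -/

import Mathlib

open Cardinal TopologicalSpace

universe u

/-- The weight of a topology: the smallest cardinality of a (topological) base. -/
noncomputable def topWeight {X : Type u} (t : TopologicalSpace X) : Cardinal.{u} :=
  sInf {c | ∃ B : Set (Set X), @TopologicalSpace.IsTopologicalBasis X t B ∧ #B = c}

/-- A topology on a group is a linear group topology if it is a group topology having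
a neighbourhood base at the identity consisting of open subgroups. -/
def IsLinearGroupTopology {G : Type u} [Group G] (t : TopologicalSpace G) : Prop :=
  @IsTopologicalGroup G t _ ∧
    ∀ U ∈ @nhds G t 1, ∃ H : Subgroup G, @IsOpen G t (H : Set G) ∧ (H : Set G) ⊆ U

/-- The minimal weight of a Hausdorff linear group topology on `G`. -/
noncomputable def wl (G : Type u) [Group G] : Cardinal.{u} :=
  sInf {c | ∃ t : TopologicalSpace G, IsLinearGroupTopology t ∧ @T2Space G t ∧ topWeight t = c}

section Helpers
variable {G : Type u} [Group G]

def conjSG (g : G) (H : Subgroup G) : Subgroup G :=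
  H.comap (MulAut.conj g⁻¹).toMonoidHom

lemma mem_conjSG {g x : G} {H : Subgroup G} : x ∈ conjSG g H ↔ g⁻¹ * x * g ∈ H := by
  simp [conjSG, Subgroup.mem_comap]

lemma conjSG_conjSG (a b : G) (H : Subgroup G) :
    conjSG a (conjSG b H) = conjSG (a * b) H := by
  ext x
  simp only [mem_conjSG, mul_inv_rev]
  constructor <;> intro h <;> · convert h using 1; group

lemma conjSG_self_mem {h : G} {H : Subgroup G} (hh : h ∈ H) : conjSG h H = H := by
  ext x
  simp only [mem_conjSG]
  constructor
  · intro hx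
    have : h * (h⁻¹ * x * h) * h⁻¹ ∈ H := H.mul_mem (H.mul_mem hh hx) (H.inv_mem hh)
    convert this using 1; group
  · intro hx
    exact H.mul_mem (H.mul_mem (H.inv_mem hh) hx) hh

lemma conjSG_eq_of_mem {a b : G} {H : Subgroup G} (h : a⁻¹ * b ∈ H) :
    conjSG b H = conjSG a H := by
  have : conjSG a (conjSG (a⁻¹ * b) H) = conjSG b H := by
    rw [conjSG_conjSG]; congr 1; group
  rw [← this, conjSG_self_mem h]

noncomputable def quotConjEquiv (g : G) (H : Subgroup G) : (G ⧸ conjSG g H) ≃ (G ⧸ H) :=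
  Quotient.congr ((Equiv.mulLeft g⁻¹).trans (Equiv.mulRight g)) (by
    intro a b
    rw [QuotientGroup.leftRel_apply, QuotientGroup.leftRel_apply]
    simp only [Equiv.trans_apply, Equiv.coe_mulLeft, Equiv.coe_mulRight, mem_conjSG]
    constructor <;> intro h <;> · convert h using 1; group)

lemma mem_leftCoset_iff' {K : Subgroup G} {a x : G} :
    x ∈ (fun y => a * y) '' (K : Set G) ↔ a⁻¹ * x ∈ K := by
  constructor
  · rintro ⟨k, hk, rfl⟩; simpa using hk
  · intro h; exact ⟨a⁻¹ * x, h, by group⟩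

lemma leftCoset_eq_of_mem {K : Subgroup G} {a b : G} (h : a⁻¹ * b ∈ K) :
    (fun y => a * y) '' (K : Set G) = (fun y => b * y) '' (K : Set G) := by
  ext x
  rw [mem_leftCoset_iff', mem_leftCoset_iff']
  constructor
  · intro hx
    have := K.mul_mem (K.inv_mem h) hx
    convert this using 1; group
  · intro hx
    have := K.mul_mem h hx
    convert this using 1; group

end Helpers

section Construction
variable {G : Type u} [Group G] {ι : Type u}

/-- finite intersections of a family of subgroups -/
def Ksub (C : ι → Subgroup G) (F : Finset ι) : Subgroup G := ⨅ j ∈ F, C j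

lemma mem_Ksub {C : ι → Subgroup G} {F : Finset ι} {x : G} :
    x ∈ Ksub C F ↔ ∀ j ∈ F, x ∈ C j := by
  simp [Ksub, Subgroup.mem_iInf]

/-- The group filter basis of finite intersections of a conjugation-closed family. -/
def wlFilterBasis (C : ι → Subgroup G) (σ : G → ι → ι)
    (hσ : ∀ x j, conjSG x (C j) = C (σ x j)) : GroupFilterBasis G where
  sets := Set.range fun F : Finset ι => ((Ksub C F : Subgroup G) : Set G)
  nonempty := ⟨_, ∅, rfl⟩
  inter_sets := by
    rintro x y ⟨F₁, rfl⟩ ⟨F₂, rfl⟩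
    classical
    refine ⟨_, ⟨F₁ ∪ F₂, rfl⟩, ?_⟩
    intro z hz
    rw [SetLike.mem_coe, mem_Ksub] at hz
    exact ⟨by rw [SetLike.mem_coe, mem_Ksub]; exact fun j hj => hz j (Finset.mem_union_left _ hj),
      by rw [SetLike.mem_coe, mem_Ksub]; exact fun j hj => hz j (Finset.mem_union_right _ hj)⟩
  one' := by rintro U ⟨F, rfl⟩; exact (Ksub C F).one_mem
  mul' := by
    rintro U ⟨F, rfl⟩
    refine ⟨_, ⟨F, rfl⟩, ?_⟩
    rintro z hz
    rw [Set.mem_mul] at hz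
    obtain ⟨a, ha, b, hb, rfl⟩ := hz
    exact (Ksub C F).mul_mem ha hb
  inv' := by
    rintro U ⟨F, rfl⟩
    exact ⟨_, ⟨F, rfl⟩, fun x hx => (Ksub C F).inv_mem hx⟩
  conj' := by
    classical
    rintro x₀ U ⟨F, rfl⟩
    refine ⟨_, ⟨F.image (σ x₀⁻¹), rfl⟩, ?_⟩
    intro v hv
    rw [SetLike.mem_coe, mem_Ksub] at hv
    show x₀ * v * x₀⁻¹ ∈ (Ksub C F : Set G)
    rw [SetLike.mem_coe, mem_Ksub]
    intro j hj
    have : v ∈ C (σ x₀⁻¹ j) := hv _ (Finset.mem_image_of_mem _ hj)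
    rw [← hσ, mem_conjSG] at this
    simpa using this

lemma wl_le_of_family (κ : Cardinal.{u}) (hκ : ℵ₀ ≤ κ)
    (H : κ.ord.ToType → Subgroup G) (hidx : ∀ i, #(G ⧸ H i) ≤ κ)
    (hbot : (⨅ i, H i) = ⊥) : wl G ≤ κ := by
  classical
  haveI : Infinite κ.ord.ToType := by
    rw [Cardinal.infinite_iff, Cardinal.mk_ord_toType]; exact hκ
  set ι := (i : κ.ord.ToType) × (G ⧸ H i) with hιdef
  haveI : Infinite ι := Infinite.of_injective (fun i : κ.ord.ToType =>
    (⟨i, QuotientGroup.mk 1⟩ : ι)) (fun a b hab => congrArg Sigma.fst hab)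
  have hικ : #ι ≤ κ := by
    rw [hιdef, Cardinal.mk_sigma]
    calc Cardinal.sum (fun i => #(G ⧸ H i)) ≤ Cardinal.sum (fun _ : κ.ord.ToType => κ) :=
          Cardinal.sum_le_sum _ _ hidx
      _ = #κ.ord.ToType * κ := Cardinal.sum_const' _ _
      _ = κ * κ := by rw [Cardinal.mk_ord_toType]
      _ = κ := Cardinal.mul_eq_self hκ
  let C : ι → Subgroup G := fun j => conjSG j.2.out (H j.1)
  have hCidx : ∀ j : ι, #(G ⧸ C j) ≤ κ := fun j =>
    le_trans (Cardinal.mk_congr (quotConjEquiv _ _)).le (hidx j.1)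
  let σ : G → ι → ι := fun x j => ⟨j.1, QuotientGroup.mk (x * j.2.out)⟩
  have hσ : ∀ (x : G) (j : ι), conjSG x (C j) = C (σ x j) := by
    intro x j
    show conjSG x (conjSG j.2.out (H j.1)) = conjSG _ (H j.1)
    rw [conjSG_conjSG]
    exact conjSG_eq_of_mem (QuotientGroup.eq.mp
      (Quotient.out_eq (QuotientGroup.mk (x * j.2.out) : G ⧸ H j.1)))
  let FB : GroupFilterBasis G := wlFilterBasis C σ hσ
  letI t : TopologicalSpace G := FB.topology
  haveI tg : @IsTopologicalGroup G t _ := FB.isTopologicalGroup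
  -- each `Ksub C F` has small index
  have hKidx : ∀ F : Finset ι, #(G ⧸ Ksub C F) ≤ κ := by
    intro F
    have hKF : Ksub C F = ⨅ j : {j // j ∈ F}, C j.1 := by
      rw [Ksub, iInf_subtype]
    calc #(G ⧸ Ksub C F) ≤ #(∀ j : {j // j ∈ F}, G ⧸ C j.1) := by
          rw [hKF]
          exact Cardinal.mk_le_of_injective (Subgroup.quotientiInfEmbedding _).injective
      _ = Cardinal.prod (fun j : {j // j ∈ F} => #(G ⧸ C j.1)) := Cardinal.mk_pi _
      _ ≤ Cardinal.prod (fun _ : {j // j ∈ F} => κ) :=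
          Cardinal.prod_le_prod _ _ (fun j => hCidx j.1)
      _ = κ ^ (#{j // j ∈ F}) := Cardinal.prod_const' _ _
      _ = κ ^ (F.card : Cardinal) := by rw [Cardinal.mk_coe_finset]
      _ ≤ κ := by exact_mod_cast Cardinal.power_nat_le hκ
  -- basic subgroups are open
  have hopen : ∀ F : Finset ι, @IsOpen G t ((Ksub C F : Subgroup G) : Set G) := fun F =>
    Subgroup.isOpen_of_mem_nhds _ (FB.mem_nhds_one ⟨F, rfl⟩)
  -- linearity
  have hlin : IsLinearGroupTopology t := by
    refine ⟨tg, fun U hU => ?_⟩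
    rcases (FB.nhds_one_hasBasis.mem_iff.mp hU) with ⟨V, ⟨F, rfl⟩, hVU⟩
    exact ⟨Ksub C F, hopen F, hVU⟩
  -- Hausdorff
  have ht2 : @T2Space G t := by
    apply @IsTopologicalGroup.t2Space_of_one_sep G t _ tg
    intro x hx
    have hx' : x ∉ (⨅ i, H i) := by rw [hbot]; simpa [Subgroup.mem_bot] using hx
    rw [Subgroup.mem_iInf, not_forall] at hx'
    obtain ⟨i, hi⟩ := hx'
    set j : ι := ⟨i, QuotientGroup.mk 1⟩ with hjdef
    have hCj : C j = H i := by
      show conjSG _ (H i) = H i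
      apply conjSG_self_mem
      have := QuotientGroup.eq.mp (Quotient.out_eq (QuotientGroup.mk (1:G) : G ⧸ H i))
      simpa using (H i).inv_mem this
    refine ⟨(C j : Set G), ?_, by rw [hCj]; exact hi⟩
    apply Filter.mem_of_superset (FB.mem_nhds_one ⟨{j}, rfl⟩)
    intro z hz
    rw [SetLike.mem_coe, mem_Ksub] at hz
    exact hz j (Finset.mem_singleton_self j)
  -- the topological basis of cosets
  set 𝓑 : Set (Set G) := Set.range fun p : (F : Finset ι) × (G ⧸ Ksub C F) =>
    (fun y => p.2.out * y) '' ((Ksub C p.1 : Subgroup G) : Set G) with h𝓑def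
  have hbasis : @TopologicalSpace.IsTopologicalBasis G t 𝓑 := by
    apply @TopologicalSpace.isTopologicalBasis_of_isOpen_of_nhds G t
    · rintro u ⟨p, rfl⟩
      exact (Homeomorph.mulLeft p.2.out).isOpenMap _ (hopen p.1)
    · intro a u ha hu
      rcases (FB.nhds_hasBasis a).mem_iff.mp (hu.mem_nhds ha) with ⟨V, ⟨F, rfl⟩, hVu⟩
      have hc : ((QuotientGroup.mk a : G ⧸ Ksub C F).out)⁻¹ * a ∈ Ksub C F :=
        QuotientGroup.eq.mp (Quotient.out_eq (QuotientGroup.mk a : G ⧸ Ksub C F))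
      refine ⟨(fun y => (QuotientGroup.mk a : G ⧸ Ksub C F).out * y) ''
        ((Ksub C F : Subgroup G) : Set G), ⟨⟨F, QuotientGroup.mk a⟩, rfl⟩, ?_, ?_⟩
      · rw [leftCoset_eq_of_mem hc]
        exact ⟨1, (Ksub C F).one_mem, mul_one a⟩
      · rw [leftCoset_eq_of_mem hc]
        exact hVu
  have hwt : topWeight t ≤ κ := by
    have h1 : topWeight t ≤ #𝓑 := csInf_le' ⟨𝓑, hbasis, rfl⟩
    refine h1.trans ?_
    calc #𝓑 ≤ #((F : Finset ι) × (G ⧸ Ksub C F)) := Cardinal.mk_range_le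
      _ = Cardinal.sum (fun F : Finset ι => #(G ⧸ Ksub C F)) := Cardinal.mk_sigma _
      _ ≤ Cardinal.sum (fun _ : Finset ι => κ) := Cardinal.sum_le_sum _ _ hKidx
      _ = #(Finset ι) * κ := Cardinal.sum_const' _ _
      _ ≤ κ * κ := by
          apply mul_le_mul' _ le_rfl
          rw [Cardinal.mk_finset_of_infinite]; exact hικ
      _ = κ := Cardinal.mul_eq_self hκ
  exact le_trans (csInf_le' ⟨t, hlin, ht2, rfl⟩) hwt

end Construction

section Membership
variable {G : Type u} [Group G]

lemma weight_mem_S (t : TopologicalSpace G) (hlin : IsLinearGroupTopology t)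
    (ht2 : @T2Space G t) :
    ∃ H : (topWeight t).ord.ToType → Subgroup G,
      (∀ i, #(G ⧸ H i) ≤ topWeight t) ∧ (⨅ i, H i) = ⊥ := by
  classical
  letI := t
  haveI tg := hlin.1
  haveI := ht2
  obtain ⟨B, hB, hBcard⟩ : ∃ B : Set (Set G), IsTopologicalBasis B ∧ #B = topWeight t := by
    have hne : {c | ∃ B : Set (Set G), IsTopologicalBasis B ∧ #B = c}.Nonempty :=
      ⟨#({U : Set G | IsOpen U}), {U | IsOpen U}, isTopologicalBasis_opens, rfl⟩
    obtain ⟨B, hB, h⟩ := csInf_mem hne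
    exact ⟨B, hB, h⟩
  set ι₀ := {b : Set G // b ∈ B ∧ (1:G) ∈ b} with hι₀
  haveI : Nonempty ι₀ := by
    obtain ⟨b, hbB, h1b, -⟩ := hB.exists_subset_of_mem_open (Set.mem_univ (1:G)) isOpen_univ
    exact ⟨⟨b, hbB, h1b⟩⟩
  have hnhds : ∀ b : ι₀, b.1 ∈ @nhds G t 1 := fun b => (hB.isOpen b.2.1).mem_nhds b.2.2
  choose K hKopen hKsub using fun b : ι₀ => hlin.2 b.1 (hnhds b)
  have hindex : ∀ L : Subgroup G, IsOpen (L : Set G) → #(G ⧸ L) ≤ #B := by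
    intro L hL
    have hcoset : ∀ q : G ⧸ L, ∃ b ∈ B, q.out ∈ b ∧ b ⊆ (fun y => q.out * y) '' (L : Set G) := by
      intro q
      have hopen : IsOpen ((fun y => q.out * y) '' (L : Set G)) :=
        (Homeomorph.mulLeft q.out).isOpenMap _ hL
      have hmem : q.out ∈ (fun y => q.out * y) '' (L : Set G) := ⟨1, L.one_mem, mul_one _⟩
      exact hB.exists_subset_of_mem_open hmem hopen
    choose f hfB hf1 hfsub using hcoset
    have hinj : Function.Injective f := by
      intro q₁ q₂ h
      have h1 : q₁.out ∈ (fun y => q₂.out * y) '' (L : Set G) := by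
        apply hfsub q₂
        rw [← h]
        exact hf1 q₁
      rw [mem_leftCoset_iff'] at h1
      have h2 : (QuotientGroup.mk q₂.out : G ⧸ L) = QuotientGroup.mk q₁.out :=
        QuotientGroup.eq.mpr h1
      rw [QuotientGroup.out_eq', QuotientGroup.out_eq'] at h2
      exact h2.symm
    apply Cardinal.mk_le_of_injective (f := fun q => (⟨f q, hfB q⟩ : B))
    intro q₁ q₂ h
    apply hinj
    have := congrArg (fun x : B => x.1) h
    simpa using this
  have hbot : (⨅ b : ι₀, K b) = ⊥ := by
    rw [eq_bot_iff]
    intro x hx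
    rw [Subgroup.mem_iInf] at hx
    rw [Subgroup.mem_bot]
    by_contra hne
    have hco : IsOpen ({x}ᶜ : Set G) := isOpen_compl_singleton
    have h1 : (1:G) ∈ ({x}ᶜ : Set G) := by simpa using Ne.symm hne
    obtain ⟨b, hbB, h1b, hbsub⟩ := hB.exists_subset_of_mem_open h1 hco
    have hxb : x ∈ b := hKsub ⟨b, hbB, h1b⟩ (hx ⟨b, hbB, h1b⟩)
    exact (hbsub hxb) rfl
  have hι₀card : #ι₀ ≤ topWeight t := by
    rw [← hBcard]
    apply Cardinal.mk_le_of_injective (f := fun b : ι₀ => (⟨b.1, b.2.1⟩ : B))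
    intro a b h
    apply Subtype.ext
    have := congrArg (fun x : B => x.1) h
    simpa using this
  have hemb : Nonempty (ι₀ ↪ (topWeight t).ord.ToType) := by
    rw [← Cardinal.le_def, Cardinal.mk_ord_toType]
    exact hι₀card
  obtain ⟨e⟩ := hemb
  have hs : Function.Surjective (Function.invFun e) := Function.invFun_surjective e.injective
  refine ⟨fun i => K (Function.invFun e i),
    fun i => le_trans (hindex _ (hKopen _)) (le_of_eq hBcard), ?_⟩
  rw [← hbot]
  exact hs.iInf_comp K

end Membership

/-- Algebraic description of the linear weight: for an infinite group `G`, the minimal weight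
of a Hausdorff linear group topology on `G` equals the smallest cardinal `κ` for which there
are subgroups `G i` (`i < κ`) of index at most `κ` with trivial intersection. -/
theorem wl_eq_subgroup_cover_number (G : Type u) [Group G] [Infinite G] :
    wl G = sInf {κ : Cardinal.{u} | ∃ H : κ.ord.ToType → Subgroup G,
      (∀ i, #(G ⧸ H i) ≤ κ) ∧ (⨅ i, H i) = ⊥} := by
  classical
  set S := {κ : Cardinal.{u} | ∃ H : κ.ord.ToType → Subgroup G,
      (∀ i, #(G ⧸ H i) ≤ κ) ∧ (⨅ i, H i) = ⊥} with hSdef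
  have hSinf : ∀ κ ∈ S, ℵ₀ ≤ κ := by
    rintro κ ⟨H, hidx, hbot⟩
    by_contra hfin
    push_neg at hfin
    haveI : Finite κ.ord.ToType := by
      rw [← Cardinal.lt_aleph0_iff_finite, Cardinal.mk_ord_toType]; exact hfin
    haveI : ∀ i, Finite (G ⧸ H i) := fun i =>
      Cardinal.lt_aleph0_iff_finite.mp (lt_of_le_of_lt (hidx i) hfin)
    have hfinQ : Finite (G ⧸ (⨅ i, H i)) :=
      Finite.of_injective _ (Subgroup.quotientiInfEmbedding H).injective
    rw [hbot] at hfinQ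
    haveI : Finite G := Finite.of_equiv _ (QuotientGroup.quotientBot (G := G)).toEquiv
    exact not_finite G
  have hGS : #G ∈ S := by
    refine ⟨fun _ => ⊥,
      fun i => le_of_eq (Cardinal.mk_congr (QuotientGroup.quotientBot (G := G)).toEquiv), ?_⟩
    haveI : Nonempty (#G).ord.ToType := by
      rw [← Cardinal.mk_ne_zero_iff, Cardinal.mk_ord_toType]
      exact Cardinal.mk_ne_zero G
    exact iInf_const
  apply le_antisymm
  · obtain ⟨H, hidx, hbot⟩ := csInf_mem (⟨#G, hGS⟩ : S.Nonempty)
    exact wl_le_of_family _ (hSinf _ (csInf_mem ⟨#G, hGS⟩)) H hidx hbot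
  · have hWne : {c | ∃ t : TopologicalSpace G,
        IsLinearGroupTopology t ∧ @T2Space G t ∧ topWeight t = c}.Nonempty := by
      letI t : TopologicalSpace G := ⊥
      haveI : DiscreteTopology G := ⟨rfl⟩
      haveI tg : IsTopologicalGroup G :=
        { continuous_mul := continuous_of_discreteTopology
          continuous_inv := continuous_of_discreteTopology }
      refine ⟨topWeight t, t, ⟨tg, ?_⟩, inferInstance, rfl⟩
      intro U hU
      refine ⟨⊥, isOpen_discrete _, ?_⟩
      rw [Subgroup.coe_bot, Set.singleton_subset_iff]
      exact mem_of_mem_nhds hU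
    obtain ⟨t, hlin, ht2, hwt⟩ := csInf_mem hWne
    obtain ⟨H, hidx, hbot⟩ := weight_mem_S t hlin ht2
    have hmem : topWeight t ∈ S := ⟨H, hidx, hbot⟩
    exact le_trans (csInf_le' hmem) hwt.le
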